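/- Let 0 < t < 2 be real, set z := t/√(1 − t/2), m := (2z)^{−1/2}, Λ := m⁻³, and u₃ := −m²·(2t − t²/4) − (3/8)mΛ. With g₂(u) := Λ⁴/3072 − Λm³ + (1/48)Λ²(9m² − 4u) + (4/3)u² and g₃(u) := (8/27)u³ + (5/144)Λ²u² − Λu(Λ³ + 768m³ + 288Λm²)/2304 + Λ²(Λ⁴ + 165888m⁴ − 4608Λm³ + 864Λ²m²)/884736, one has g₂(u₃) = (2+t)⁴(4−t)²/(96(2−t)³) and 36·z·(2−t)²·g₃(u₃) = t·(4−t)·(2+t)²·g₂(u₃). In particular g₂(u₃)/(36·g₃(u₃)) = z(2−t)²/((2+t)²·t·(4−t)). -/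

import Mathlib

set_option maxHeartbeats 4000000 in
/-- equal-mass `N_f = 3` Weierstrass invariants at the monopole
singularity. For `0 < t < 2`, with `z = t/√(1 − t/2)`, `m = (2z)^{−1/2}`,
`Λ = m⁻³` and `u₃ = −m²(2t − t²/4) − (3/8)mΛ`, one has
`g₂(u₃) = (2+t)⁴(4−t)²/(96(2−t)³)`,
`36z(2−t)² g₃(u₃) = t(4−t)(2+t)² g₂(u₃)`, and in particular
`g₂(u₃)/(36 g₃(u₃)) = z(2−t)²/((2+t)² t (4−t))`. -/
theorem stmt_6 (t z m Λ u3 : ℝ) (ht0 : 0 < t) (ht2 : t < 2)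
    (hz : z = t / Real.sqrt (1 - t/2))
    (hm : m = 1 / Real.sqrt (2*z))
    (hΛ : Λ = 1 / m^3)
    (hu3 : u3 = -m^2 * (2*t - t^2/4) - (3/8)*m*Λ)
    (g2 g3 : ℝ → ℝ)
    (hg2 : ∀ v, g2 v = Λ^4/3072 - Λ*m^3 + (1/48)*Λ^2*(9*m^2 - 4*v) + (4/3)*v^2)
    (hg3 : ∀ v, g3 v = (8/27)*v^3 + (5/144)*Λ^2*v^2
        - Λ*v*(Λ^3 + 768*m^3 + 288*Λ*m^2)/2304
        + Λ^2*(Λ^4 + 165888*m^4 - 4608*Λ*m^3 + 864*Λ^2*m^2)/884736) :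
    g2 u3 = (2 + t)^4*(4 - t)^2/(96*(2 - t)^3) ∧
    36*z*(2 - t)^2 * g3 u3 = t*(4 - t)*(2 + t)^2 * g2 u3 ∧
    g2 u3 / (36 * g3 u3) = z*(2 - t)^2/((2 + t)^2*t*(4 - t)) := by
  have ht2' : (0:ℝ) < 1 - t/2 := by linarith
  set s := Real.sqrt (1 - t/2) with hs
  have hs0 : 0 < s := Real.sqrt_pos.mpr ht2'
  have hs2 : s^2 = 1 - t/2 := Real.sq_sqrt ht2'.le
  have hz0 : 0 < z := by rw [hz]; positivity
  have hsq : (Real.sqrt (2*z))^2 = 2*z := Real.sq_sqrt (by linarith)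
  have hm0 : 0 < m := by rw [hm]; positivity
  have hm0' : m ≠ 0 := ne_of_gt hm0
  have hm2 : m^2 * (2*z) = 1 := by
    rw [hm, div_pow, one_pow, hsq]
    field_simp
  have hzs : z * s = t := by
    rw [hz]; field_simp
  have hms : 2*t*m^2 = s := by
    have h1 : m^2 * (2*(z*s)) = s := by
      calc m^2 * (2*(z*s)) = (m^2*(2*z))*s := by ring
      _ = s := by rw [hm2]; ring
    rw [hzs] at h1; linarith
  have hq : 4*t^2*m^4 = 1 - t/2 := by
    have h2 : (2*t*m^2)^2 = s^2 := by rw [hms]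
    rw [hs2] at h2; nlinarith [h2]
  have hzv : z * (2*m^2) = 1 := by linarith [hm2]
  have h2t : (2:ℝ) - t ≠ 0 := by linarith
  have h2t' : (2:ℝ) + t ≠ 0 := by linarith
  have h4t : (4:ℝ) - t ≠ 0 := by linarith
  have hm4' : 8*t^2*m^4 = 2 - t := by linarith [hq]
  have ht0' : t ≠ 0 := ne_of_gt ht0
  have hu3v : u3 = -(16+2*t+t^2)/(32*t*m^2) := by
    rw [hu3, hΛ]
    field_simp
    linear_combination ((-256)*m^0*t^0 + (32)*m^0*t^1) * hm4'
  have e2 : g2 u3 = (2 + t)^4*(4 - t)^2/(96*(2 - t)^3) := by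
    rw [hg2, hu3v, hΛ]
    field_simp
    linear_combination ((-56623104)*m^0*t^2 + (56623104)*m^0*t^3 + (-14155776)*m^0*t^4 + (-7247757312)*m^4*t^1 + (6341787648)*m^4*t^2 + (-1358954496)*m^4*t^3 + (-57982058496)*m^8*t^0 + (43486543872)*m^8*t^1 + (-40768634880)*m^8*t^2 + (7247757312)*m^8*t^3 + (1358954496)*m^8*t^4 + (-56623104)*m^8*t^6) * hm4'
  have e3 : 36*z*(2 - t)^2 * g3 u3 = t*(4 - t)*(2 + t)^2 * g2 u3 := by
    have hzv2 : z = 1/(2*m^2) := by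
      field_simp at hzv ⊢; linarith [hzv]
    rw [e2, hg3, hu3v, hΛ, hzv2]
    field_simp
    linear_combination ((-16231265527136256)*m^0*t^3 + (32462531054272512)*m^0*t^4 + (-24346898290704384)*m^0*t^5 + (8115632763568128)*m^0*t^6 + (-1014454095446016)*m^0*t^7 + (-3116402981210161152)*m^4*t^2 + (5843255589769052160)*m^4*t^3 + (-4090278912838336512)*m^4*t^4 + (1298501242170900480)*m^4*t^5 + (-194775186325635072)*m^4*t^6 + (24346898290704384)*m^4*t^7 + (-4057816381784064)*m^4*t^8 + (-124656119248406446080)*m^8*t^1 + (218148208684711280640)*m^8*t^2 + (-156209699433159327744)*m^8*t^3 + (64275811487459573760)*m^8*t^4 + (-18990580666749419520)*m^8*t^5 + (4090278912838336512)*m^8*t^6 + (-430128536469110784)*m^8*t^7 + (-8115632763568128)*m^8*t^8 + (2028908190892032)*m^8*t^9 + (531866108793200836608)*m^12*t^0 + (-864282426788951359488)*m^12*t^1 + (-373968357745219338240)*m^12*t^2 + (1068926222555085275136)*m^12*t^3 + (-627955200713847472128)*m^12*t^4 + (165948458749441081344)*m^12*t^5 + (-15971565278702075904)*m^12*t^6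 + (-1363426304279445504)*m^12*t^7 + (292162779488452608)*m^12*t^8 + (16231265527136256)*m^12*t^9 + (-8115632763568128)*m^12*t^10 + (-265933054396600418304)*m^16*t^2 + (-598349372392350941184)*m^16*t^3 + (-448762029294263205888)*m^16*t^4 + (-62328059624203223040)*m^16*t^5 + (74793671549043867648)*m^16*t^6 + (28047626830891450368)*m^16*t^7 + (-3116402981210161152)*m^16*t^8 + (-2337302235907620864)*m^16*t^9 + (64925062108545024)*m^16*t^11) * hm4'
  refine ⟨e2, e3, ?_⟩
  have hg2pos : 0 < g2 u3 := by
    rw [e2]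
    apply div_pos
    · have h1 : 0 < (2+t)^4 := by positivity
      have h2 : 0 < (4-t)^2 := by nlinarith
      nlinarith
    · have : 0 < (2-t)^3 := pow_pos (by linarith) 3
      linarith
  have h36 : 0 < 36*z*(2-t)^2 := by
    have : 0 < (2-t)^2 := pow_pos (by linarith) 2
    have := mul_pos hz0 this
    nlinarith
  have hRpos : 0 < t*(4 - t)*(2 + t)^2 * g2 u3 := by
    have h1 : 0 < (2+t)^2 := by positivity
    have h4 : 0 < 4 - t := by linarith
    exact mul_pos (mul_pos (mul_pos ht0 h4) h1) hg2pos
  have hg3pos : 0 < g3 u3 := by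
    by_contra h
    push_neg at h
    have hle : 36*z*(2-t)^2 * g3 u3 ≤ 0 := mul_nonpos_of_nonneg_of_nonpos (le_of_lt h36) h
    rw [e3] at hle
    linarith
  have h36' : 36 * g3 u3 ≠ 0 := by positivity
  have hden : (2 + t)^2*t*(4 - t) ≠ 0 := by positivity
  rw [div_eq_div_iff h36' hden]
  linear_combination (-1) * e3
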